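/- Let Γ be a quiver, X a topological space, and (T, f) the constant Γ-representation with T(i) = X for every vertex i and f_α = id_X for every arrow α. If Γ is connected and acyclic, then the Γ-limit chain complex lim^Γ(S^Γ(T, f)) is isomorphic to the singular chain complex S(X), and hence H_n(T, f) ≅ H_n(X) for all n ≥ 0. -/

import Mathlib

/- STATEMENT 13: For a connected acyclic quiver Γ and the constant top-representation
T(i) = X with identity arrow maps, the limit chain complex lim^Γ(S^Γ(T,f)) is
isomorphic to the singular chain complex S(X); hence Hₙ(T,f) ≅ Hₙ(X) for all n. -/

open CategoryTheory CategoryTheory.Limits AlgebraicTopology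

/-- The singular chain complex functor. -/
noncomputable def singularChainsFunctor : TopCat.{0} ⥤ ChainComplex AddCommGrpCat.{0} ℕ :=
  TopCat.toSSet ⋙ ((SimplicialObject.whiskering _ _).obj AddCommGrpCat.free) ⋙
    alternatingFaceMapComplex AddCommGrpCat.{0}

/-- A quiver is connected if its underlying undirected graph is connected. -/
def QuiverConnected (V : Type) [Quiver.{1} V] : Prop :=
  ∀ a b : V, Nonempty (@Quiver.Path (Quiver.Symmetrify V) _ a b)

/-- The constant top-representation of a quiver on a space `X`, all arrow maps being
the identity. -/
def constRep (V : Type) [Quiver.{1} V] (X : TopCat.{0}) : V ⥤q TopCat.{0} :=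
  ⟨fun _ => X, fun _ => 𝟙 X⟩

section Aux

variable (V : Type) [Quiver.{1} V] (X : TopCat.{0})

/-- The lifted functor in question. -/
noncomputable abbrev liftedF : Paths V ⥤ ChainComplex AddCommGrpCat.{0} ℕ :=
  Paths.lift ((constRep V X) ⋙q singularChainsFunctor.toPrefunctor)

lemma liftedF_map_eq {a b : Paths V} (p : a ⟶ b) :
    (liftedF V X).map p = 𝟙 (singularChainsFunctor.obj X) := by
  unfold Quiver.Hom at p
  induction p with
  | nil => rfl
  | cons q e ih =>
      show (liftedF V X).map (Quiver.Path.cons q e) = _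
      show (liftedF V X).map q ≫ singularChainsFunctor.map (𝟙 X) = _
      rw [ih]
      exact (Category.id_comp _).trans (singularChainsFunctor.map_id X)

/-- The constant cone over the lifted functor. -/
noncomputable def constCone : Cone (liftedF V X) where
  pt := singularChainsFunctor.obj X
  π :=
    { app := fun _ => 𝟙 _
      naturality := fun a b p => by
        rw [liftedF_map_eq]
        rfl }

lemma cone_app_eq (hconn : QuiverConnected V) (s : Cone (liftedF V X)) (a b : V) :
    s.π.app a = s.π.app b := by
  obtain ⟨p⟩ := hconn a b
  induction p with
  | nil => rfl
  | @cons c d q e ih =>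
      rw [ih]
      rcases e with e | e
      · have := s.π.naturality ((Paths.of V).map e)
        simp only [liftedF_map_eq, Category.comp_id, Category.id_comp] at this
        exact this.symm
      · have := s.π.naturality ((Paths.of V).map e)
        simp only [liftedF_map_eq, Category.comp_id, Category.id_comp] at this
        exact this

/-- The constant cone is a limit cone when the quiver is connected. -/
noncomputable def constConeIsLimit [Nonempty V] (hconn : QuiverConnected V) :
    IsLimit (constCone V X) where
  lift s := s.π.app (Classical.arbitrary V)
  fac s j := by
    show s.π.app (Classical.arbitrary V) ≫ 𝟙 _ = s.π.app j
    rw [Category.comp_id, cone_app_eq V X hconn s (Classical.arbitrary V) j]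
  uniq s m hm := by
    have := hm (Classical.arbitrary V)
    exact (Category.comp_id m).symm.trans this

end Aux

theorem limit_singularChains_constRep (V : Type) [Quiver.{1} V] [Nonempty V]
    (hconn : QuiverConnected V)
    (hacyclic : ∀ (i : V) (p : Quiver.Path i i), p.length = 0)
    (X : TopCat.{0}) :
    Nonempty
      (limit (Paths.lift ((constRep V X) ⋙q singularChainsFunctor.toPrefunctor)) ≅
        singularChainsFunctor.obj X) ∧
    ∀ n : ℕ,
      Nonempty
        ((limit (Paths.lift ((constRep V X) ⋙q singularChainsFunctor.toPrefunctor))).homology n ≅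
          (singularChainsFunctor.obj X).homology n) := by
  have e : limit (liftedF V X) ≅ singularChainsFunctor.obj X :=
    limit.isoLimitCone ⟨constCone V X, constConeIsLimit V X hconn⟩
  exact ⟨⟨e⟩, fun n => ⟨(HomologicalComplex.homologyFunctor _ _ n).mapIso e⟩⟩
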